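/- Let N ∈ ℕ and δ, ε, A, A_1, …, A_N ∈ ℝ with A ≠ 2δ. Let a : ℝ → ℝ be twice differentiable with a(t) > 0 for all t, let φ be differentiable, and let G, G_1, …, G_N : ℝ → ℝ satisfy H'(t) + δH(t)² + εφ'(t)² = G(t)/a(t)^A + Σ_{i=1}^N G_i(t)/a(t)^{A_i} for all t, where H = a'/a. Let θ > 0 and q ∈ ℝ \ {δ}; let τ satisfy τ'(t) = θ a(t)^{q−δ} for all t with differentiable inverse f (f(τ(t)) = t); let τ_σ satisfy τ_σ'(t) = (τ'(f(τ_σ(t))))^{(A+2q−2δ)/(4(q−δ))} for all t; let σ satisfy σ'(t) = 1/τ_σ'(t) with differentiable inverse g (g(σ(t)) = t). Define ψ(s) = φ(f(τ_σ(g(s)))), u(s) = a(f(τ_σ(g(s))))^{(2δ−A)/2}, P(s) = (1/2)ε(A−2δ)ψ'(s)², E(s) = ((A−2δ)/2) θ^{A/(q−δ)} G(f(τ_σ(g(s)))), F_i(s) = ((2δ−A)/2) θ^{A/(q−δ)} G_i(f(τ_σ(g(s)))), and C_i = 1 − 2(A_i − 2δ)/(A − 2δ). Then for every t ∈ ℝ,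 at s = σ(t) the function u is twice differentiable and satisfies the Schrödinger-type equation u''(s) + [E(s) − P(s)]u(s) = Σ_{i=1}^N F_i(s)/u(s)^{C_i}. -/

import Mathlib

open Filter

lemma surj_of_strictMono_leftInverse {τ f : ℝ → ℝ} (hm : StrictMono τ)
    (hτc : Continuous τ) (hfc : Continuous f) (hfτ : ∀ t, f (τ t) = t) :
    Function.Surjective τ := by
  intro x
  by_contra hx
  push_neg at hx
  have hcase : (∀ t, τ t < x) ∨ (∀ t, x < τ t) := by
    by_contra hco
    push_neg at hco
    obtain ⟨⟨t₁, ht₁⟩, t₂, ht₂⟩ := hco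
    have h1 : x < τ t₁ := lt_of_le_of_ne ht₁ (fun h => hx t₁ h.symm)
    have h2 : τ t₂ < x := lt_of_le_of_ne ht₂ (hx t₂)
    have ht : t₂ ≤ t₁ := (hm.lt_iff_lt.mp (h2.trans h1)).le
    obtain ⟨t, _, ht'⟩ := intermediate_value_Icc ht hτc.continuousOn ⟨h2.le, h1.le⟩
    exact hx t ht'
  rcases hcase with hb | hb
  · have hbdd : BddAbove (Set.range τ) := ⟨x, by rintro y ⟨t, rfl⟩; exact (hb t).le⟩
    have hlim : Tendsto τ atTop (nhds (⨆ t, τ t)) :=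
      tendsto_atTop_ciSup hm.monotone hbdd
    have h3 : Tendsto (fun t : ℝ => t) atTop (nhds (f (⨆ t, τ t))) := by
      simpa [Function.comp_def, hfτ] using (hfc.tendsto _).comp hlim
    exact not_tendsto_atTop_of_tendsto_nhds h3 tendsto_id
  · have hbdd : BddBelow (Set.range τ) := ⟨x, by rintro y ⟨t, rfl⟩; exact (hb t).le⟩
    have hlim : Tendsto τ atBot (nhds (⨅ t, τ t)) :=
      tendsto_atBot_ciInf hm.monotone hbdd
    have h3 : Tendsto (fun t : ℝ => t) atBot (nhds (f (⨅ t, τ t))) := by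
      simpa [Function.comp_def, hfτ] using (hfc.tendsto _).comp hlim
    exact not_tendsto_atBot_of_tendsto_nhds h3 tendsto_id

set_option maxHeartbeats 4000000 in
/-- from the scale factor equation directly to a Schrödinger-type equation. -/
theorem stmt_4
    (N : ℕ) (δ ε A : ℝ) (Ai : Fin N → ℝ) (hA : A ≠ 2 * δ)
    (a φ G : ℝ → ℝ) (Gi : Fin N → ℝ → ℝ)
    (ha : Differentiable ℝ a) (ha' : Differentiable ℝ (deriv a))
    (hapos : ∀ t, 0 < a t)
    (hφ : Differentiable ℝ φ)
    (hSF : ∀ t, deriv (fun t => deriv a t / a t) t + δ * (deriv a t / a t) ^ 2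
        + ε * (deriv φ t) ^ 2
        = G t / a t ^ A + ∑ i, Gi i t / a t ^ Ai i)
    (θ q : ℝ) (hθ : 0 < θ) (hq : q ≠ δ)
    (τ f τσ σ g : ℝ → ℝ)
    (hτ : ∀ t, deriv τ t = θ * a t ^ (q - δ))
    (hf : Differentiable ℝ f) (hfτ : ∀ t, f (τ t) = t)
    (hτσ : ∀ t, deriv τσ t
        = (deriv τ (f (τσ t))) ^ ((A + 2 * q - 2 * δ) / (4 * (q - δ))))
    (hσ : ∀ t, deriv σ t = 1 / deriv τσ t)
    (hg : Differentiable ℝ g) (hgσ : ∀ t, g (σ t) = t)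
    (ψ u P E : ℝ → ℝ) (F : Fin N → ℝ → ℝ) (C : Fin N → ℝ)
    (hψ : ∀ s, ψ s = φ (f (τσ (g s))))
    (hu : ∀ s, u s = a (f (τσ (g s))) ^ ((2 * δ - A) / 2))
    (hP : ∀ s, P s = (1 / 2) * ε * (A - 2 * δ) * (deriv ψ s) ^ 2)
    (hE : ∀ s, E s = ((A - 2 * δ) / 2) * θ ^ (A / (q - δ)) * G (f (τσ (g s))))
    (hF : ∀ i s, F i s = ((2 * δ - A) / 2) * θ ^ (A / (q - δ)) * Gi i (f (τσ (g s))))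
    (hC : ∀ i, C i = 1 - 2 * (Ai i - 2 * δ) / (A - 2 * δ)) :
    ∀ t, DifferentiableAt ℝ u (σ t) ∧ DifferentiableAt ℝ (deriv u) (σ t) ∧
      deriv (deriv u) (σ t) + (E (σ t) - P (σ t)) * u (σ t)
        = ∑ i, F i (σ t) / u (σ t) ^ C i := by
  have hK : q - δ ≠ 0 := sub_ne_zero.mpr hq
  have hA2 : A - 2 * δ ≠ 0 := sub_ne_zero.mpr hA
  -- τ basics
  have hτpos : ∀ t, 0 < deriv τ t := fun t => by
    rw [hτ]; exact mul_pos hθ (Real.rpow_pos_of_pos (hapos t) _)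
  have hτdiff : Differentiable ℝ τ := fun t => differentiableAt_of_deriv_ne_zero (hτpos t).ne'
  have hτmono : StrictMono τ := strictMono_of_deriv_pos hτpos
  have hτsurj : Function.Surjective τ :=
    surj_of_strictMono_leftInverse hτmono hτdiff.continuous hf.continuous hfτ
  have hτf : ∀ x, τ (f x) = x := by
    intro x; obtain ⟨t, rfl⟩ := hτsurj x; rw [hfτ]
  have hfd : ∀ x, HasDerivAt f (1 / deriv τ (f x)) x := by
    intro x
    have h1 : HasDerivAt τ (deriv τ (f x)) (f x) := (hτdiff _).hasDerivAt
    have h2 : HasDerivAt f (deriv f x) (τ (f x)) := by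
      rw [hτf]; exact (hf x).hasDerivAt
    have h3 := h2.comp (f x) h1
    have h4 : HasDerivAt (f ∘ τ) 1 (f x) := by
      have he : (f ∘ τ) = id := funext fun t => hfτ t
      rw [he]; exact hasDerivAt_id _
    have h5 : deriv f x * deriv τ (f x) = 1 := h3.unique h4
    have h6 : deriv f x = 1 / deriv τ (f x) :=
      eq_one_div_of_mul_eq_one_left (by linarith [h5, mul_comm (deriv f x) (deriv τ (f x))])
    rw [← h6]; exact (hf x).hasDerivAt
  -- τσ basics
  have hτσpos : ∀ t, 0 < deriv τσ t := fun t => by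
    rw [hτσ]; exact Real.rpow_pos_of_pos (hτpos _) _
  have hτσdiff : Differentiable ℝ τσ := fun t =>
    differentiableAt_of_deriv_ne_zero (hτσpos t).ne'
  -- σ basics
  have hσpos : ∀ t, 0 < deriv σ t := fun t => by
    rw [hσ]; exact one_div_pos.mpr (hτσpos t)
  have hσdiff : Differentiable ℝ σ := fun t => differentiableAt_of_deriv_ne_zero (hσpos t).ne'
  have hσmono : StrictMono σ := strictMono_of_deriv_pos hσpos
  have hσsurj : Function.Surjective σ :=
    surj_of_strictMono_leftInverse hσmono hσdiff.continuous hg.continuous hgσ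
  have hσg : ∀ s, σ (g s) = s := by
    intro s; obtain ⟨t, rfl⟩ := hσsurj s; rw [hgσ]
  have hgd : ∀ s, HasDerivAt g (deriv τσ (g s)) s := by
    intro s
    have h1 : HasDerivAt σ (deriv σ (g s)) (g s) := (hσdiff _).hasDerivAt
    have h2 : HasDerivAt g (deriv g s) (σ (g s)) := by
      rw [hσg]; exact (hg s).hasDerivAt
    have h3 := h2.comp (g s) h1
    have h4 : HasDerivAt (g ∘ σ) 1 (g s) := by
      have he : (g ∘ σ) = id := funext fun t => hgσ t
      rw [he]; exact hasDerivAt_id _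
    have h5 : deriv g s * deriv σ (g s) = 1 := h3.unique h4
    have h6 : deriv g s = deriv τσ (g s) := by
      rw [hσ] at h5
      field_simp at h5
      rwa [div_eq_one_iff_eq (hτσpos (g s)).ne'] at h5
    rw [← h6]; exact (hg s).hasDerivAt
  -- derivative of the composite w = f ∘ τσ ∘ g
  have hwd : ∀ s, HasDerivAt (fun s => f (τσ (g s)))
      (θ ^ (A / (2 * (q - δ))) * a (f (τσ (g s))) ^ (A / 2)) s := by
    intro s
    have h1 : HasDerivAt τσ (deriv τσ (g s)) (g s) := (hτσdiff _).hasDerivAt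
    have h2 : HasDerivAt (fun s => τσ (g s)) (deriv τσ (g s) * deriv τσ (g s)) s :=
      h1.comp s (hgd s)
    have h3 : HasDerivAt (fun s => f (τσ (g s)))
        (1 / deriv τ (f (τσ (g s))) * (deriv τσ (g s) * deriv τσ (g s))) s :=
      (hfd (τσ (g s))).comp s h2
    convert h3 using 1
    rw [hτσ (g s), hτ (f (τσ (g s)))]
    have hb : 0 < a (f (τσ (g s))) := hapos _
    have hX : 0 < θ * a (f (τσ (g s))) ^ (q - δ) :=
      mul_pos hθ (Real.rpow_pos_of_pos hb _)
    rw [← Real.rpow_add hX]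
    rw [show ((A + 2*q - 2*δ)/(4*(q-δ)) + (A + 2*q - 2*δ)/(4*(q-δ)))
        = A/(2*(q-δ)) + 1 by field_simp; ring]
    rw [Real.rpow_add hX, Real.rpow_one]
    rw [Real.mul_rpow hθ.le (Real.rpow_pos_of_pos hb _).le, ← Real.rpow_mul hb.le]
    rw [show (q - δ) * (A/(2*(q-δ))) = A/2 by field_simp]
    field_simp
  have hβd : ∀ s, HasDerivAt (fun s => a (f (τσ (g s))))
      (deriv a (f (τσ (g s)))
        * (θ ^ (A / (2 * (q - δ))) * a (f (τσ (g s))) ^ (A / 2))) s :=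
    fun s => ((ha _).hasDerivAt).comp s (hwd s)
  have hueq : u = fun s => a (f (τσ (g s))) ^ ((2 * δ - A) / 2) := funext hu
  have hud : ∀ s, HasDerivAt u
      ((deriv a (f (τσ (g s)))
          * (θ ^ (A / (2 * (q - δ))) * a (f (τσ (g s))) ^ (A / 2)))
        * ((2 * δ - A) / 2)
        * a (f (τσ (g s))) ^ ((2 * δ - A) / 2 - 1)) s := by
    intro s
    rw [hueq]
    exact (hβd s).rpow_const (Or.inl (hapos _).ne')
  have hU1eq : deriv u = fun s =>
      (deriv a (f (τσ (g s)))
          * (θ ^ (A / (2 * (q - δ))) * a (f (τσ (g s))) ^ (A / 2)))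
        * ((2 * δ - A) / 2)
        * a (f (τσ (g s))) ^ ((2 * δ - A) / 2 - 1) :=
    funext fun s => (hud s).deriv
  -- second derivative
  have hU2 : ∀ s, HasDerivAt (fun s =>
      (deriv a (f (τσ (g s)))
          * (θ ^ (A / (2 * (q - δ))) * a (f (τσ (g s))) ^ (A / 2)))
        * ((2 * δ - A) / 2)
        * a (f (τσ (g s))) ^ ((2 * δ - A) / 2 - 1))
      (((2 * δ - A) / 2) * θ ^ (A / (q - δ))
        * (deriv (deriv a) (f (τσ (g s)))
            * (a (f (τσ (g s))) ^ ((2 * δ - A) / 2) * a (f (τσ (g s))) ^ A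
                / a (f (τσ (g s))))
          + (δ - 1) * (deriv a (f (τσ (g s)))) ^ 2
            * (a (f (τσ (g s))) ^ ((2 * δ - A) / 2) * a (f (τσ (g s))) ^ A
                / (a (f (τσ (g s))) * a (f (τσ (g s))))))) s := by
    intro s
    have hb : 0 < a (f (τσ (g s))) := hapos _
    have hbne : a (f (τσ (g s))) ≠ 0 := hb.ne'
    have hdd : HasDerivAt (fun s => deriv a (f (τσ (g s))))
        (deriv (deriv a) (f (τσ (g s)))
          * (θ ^ (A / (2 * (q - δ))) * a (f (τσ (g s))) ^ (A / 2))) s :=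
      ((ha' _).hasDerivAt).comp s (hwd s)
    have hY : HasDerivAt (fun s => a (f (τσ (g s))) ^ (A / 2))
        ((deriv a (f (τσ (g s)))
            * (θ ^ (A / (2 * (q - δ))) * a (f (τσ (g s))) ^ (A / 2)))
          * (A / 2) * a (f (τσ (g s))) ^ (A / 2 - 1)) s :=
      (hβd s).rpow_const (Or.inl hbne)
    have hB : HasDerivAt (fun s => a (f (τσ (g s))) ^ ((2 * δ - A) / 2 - 1))
        ((deriv a (f (τσ (g s)))
            * (θ ^ (A / (2 * (q - δ))) * a (f (τσ (g s))) ^ (A / 2)))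
          * ((2 * δ - A) / 2 - 1)
          * a (f (τσ (g s))) ^ ((2 * δ - A) / 2 - 1 - 1)) s :=
      (hβd s).rpow_const (Or.inl hbne)
    have hcomb := ((hdd.mul (hY.const_mul (θ ^ (A / (2 * (q - δ)))))).mul_const
      ((2 * δ - A) / 2)).mul hB
    convert hcomb using 1
    case e'_4 => rfl
    case e'_5 => rfl
    case e'_8 => rfl
    have hsub : ∀ x : ℝ, a (f (τσ (g s))) ^ (x - 1)
        = a (f (τσ (g s))) ^ x / a (f (τσ (g s))) := fun x => by
      rw [Real.rpow_sub hb, Real.rpow_one]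
    have hY2 : a (f (τσ (g s))) ^ (A / 2) * a (f (τσ (g s))) ^ (A / 2)
        = a (f (τσ (g s))) ^ A := by
      rw [← Real.rpow_add hb]; congr 1; ring
    have hθ2 : θ ^ (A / (2 * (q - δ))) * θ ^ (A / (2 * (q - δ))) = θ ^ (A / (q - δ)) := by
      rw [← Real.rpow_add hθ]; congr 1; field_simp; ring
    simp only [Pi.mul_apply]
    rw [hsub ((2 * δ - A) / 2 - 1), hsub ((2 * δ - A) / 2), hsub (A / 2)]
    rw [← hY2, ← hθ2]
    field_simp
    ring
  -- scale factor equation, solved for the second derivative of a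
  have ha2 : ∀ x, deriv (deriv a) x =
      (G x / a x ^ A + ∑ i, Gi i x / a x ^ Ai i - δ * (deriv a x / a x) ^ 2
        - ε * (deriv φ x) ^ 2) * a x + (deriv a x) ^ 2 / a x := by
    intro x
    have h0 := hSF x
    rw [show (fun t => deriv a t / a t) = deriv a / a from rfl, deriv_div (ha' x) (ha x) (hapos x).ne'] at h0
    have hax : a x ≠ 0 := (hapos x).ne'
    field_simp at h0 ⊢
    linear_combination h0
  -- final assembly
  intro t
  have hbv : 0 < a (f (τσ (g (σ t)))) := hapos _
  have hbvne : a (f (τσ (g (σ t)))) ≠ 0 := hbv.ne'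
  refine ⟨(hud (σ t)).differentiableAt, ?_, ?_⟩
  · rw [hU1eq]; exact (hU2 (σ t)).differentiableAt
  · rw [hU1eq, (hU2 (σ t)).deriv]
    have hψeq : ψ = fun s => φ (f (τσ (g s))) := funext hψ
    have hψd : deriv ψ (σ t) = deriv φ (f (τσ (g (σ t))))
        * (θ ^ (A / (2 * (q - δ))) * a (f (τσ (g (σ t)))) ^ (A / 2)) := by
      rw [hψeq]
      exact (((hφ _).hasDerivAt).comp (σ t) (hwd (σ t))).deriv
    rw [hE, hP, hψd, hu, ha2 (f (τσ (g (σ t))))]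
    simp only [hF, hu, hC]
    have hθ2 : θ ^ (A / (2 * (q - δ))) * θ ^ (A / (2 * (q - δ))) = θ ^ (A / (q - δ)) := by
      rw [← Real.rpow_add hθ]; congr 1; field_simp; ring
    have hY2 : a (f (τσ (g (σ t)))) ^ (A / 2) * a (f (τσ (g (σ t)))) ^ (A / 2)
        = a (f (τσ (g (σ t)))) ^ A := by
      rw [← Real.rpow_add hbv]; congr 1; ring
    have hZsq : (deriv φ (f (τσ (g (σ t))))
          * (θ ^ (A / (2 * (q - δ))) * a (f (τσ (g (σ t)))) ^ (A / 2))) ^ 2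
        = (deriv φ (f (τσ (g (σ t))))) ^ 2
          * (θ ^ (A / (q - δ)) * a (f (τσ (g (σ t)))) ^ A) := by
      rw [mul_pow, mul_pow, pow_two (θ ^ (A / (2 * (q - δ)))),
        pow_two (a (f (τσ (g (σ t)))) ^ (A / 2)), hθ2, hY2]
    rw [hZsq]
    have hbA : (0:ℝ) < a (f (τσ (g (σ t)))) ^ A := Real.rpow_pos_of_pos hbv A
    have hbAne : a (f (τσ (g (σ t)))) ^ A ≠ 0 := hbA.ne'
    trans ((2 * δ - A) / 2 * θ ^ (A / (q - δ))
        * (a (f (τσ (g (σ t)))) ^ ((2 * δ - A) / 2) * a (f (τσ (g (σ t)))) ^ A)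
        * ∑ i, Gi i (f (τσ (g (σ t)))) / a (f (τσ (g (σ t)))) ^ Ai i)
    · set v := f (τσ (g (σ t))) with hv
      set b := a v with hbdef
      set dd := deriv a v with hdd
      set hh := deriv (deriv a) v with hhh
      set Φd := deriv φ v with hΦd
      set T := θ ^ (A / (q - δ)) with hT
      set Gv := G v with hGv
      set Bc := b ^ ((2 * δ - A) / 2) with hBc
      set BA := b ^ A with hBA
      set S := ∑ i, Gi i v / b ^ Ai i with hSdef
      clear_value v b dd hh Φd T Gv Bc BA S
      field_simp
      ring
    · rw [Finset.mul_sum]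
      refine Finset.sum_congr rfl fun i _ => ?_
      have e1 : (a (f (τσ (g (σ t)))) ^ ((2 * δ - A) / 2)) ^ (1 - 2 * (Ai i - 2 * δ) / (A - 2 * δ))
          = a (f (τσ (g (σ t)))) ^ (Ai i)
            / (a (f (τσ (g (σ t)))) ^ ((2 * δ - A) / 2) * a (f (τσ (g (σ t)))) ^ A) := by
        rw [← Real.rpow_mul hbv.le, ← Real.rpow_add hbv, ← Real.rpow_sub hbv]
        congr 1
        field_simp
        ring
      rw [e1, div_div_eq_mul_div]
      ring
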